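/- For all reals x ≥ 0, y ≥ 0, all reals κ₁₂ ≥ 0, κ₃₁ ≥ 0, every real κ₃₂ > 0, and every m ∈ ℕ, the double sequence (n₁, n₂) ↦ x^{n₁} · y^{n₂} / (Γ(1 + κ₁₂·n₂ + n₁) · Γ(1 + κ₃₁·n₁ + κ₃₂·n₂ + m)) is summable over ℕ × ℕ. (This is the convergence of the normalization series of the (γ₁₂, γ₃)-deformed vector coherent states.) -/

import Mathlib

open Real Set

lemma gamma_one_le_of_two_le {b : ℝ} (hb : 2 ≤ b) : 1 ≤ Real.Gamma b := by
  rcases eq_or_lt_of_le hb with h | h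
  · rw [← h, Real.Gamma_two]
  · rw [← Real.Gamma_two]
    exact (Real.Gamma_strictMonoOn_Ici (by norm_num) (mem_Ici.mpr hb) h).le

lemma gamma_le_one_of_mem {a : ℝ} (h1 : 1 ≤ a) (h2 : a ≤ 2) : Real.Gamma a ≤ 1 := by
  have key := Real.convexOn_Gamma.2 (mem_Ioi.mpr one_pos) (mem_Ioi.mpr two_pos)
    (show (0:ℝ) ≤ 2 - a by linarith) (show (0:ℝ) ≤ a - 1 by linarith)
    (show (2 - a) + (a - 1) = 1 by ring)
  have h' : (2 - a) • (1:ℝ) + (a - 1) • (2:ℝ) = a := by simp only [smul_eq_mul]; ring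
  rw [h'] at key
  calc Real.Gamma a ≤ (2 - a) • Real.Gamma 1 + (a - 1) • Real.Gamma 2 := key
    _ = 1 := by rw [Real.Gamma_one, Real.Gamma_two]; simp only [smul_eq_mul]; ring

lemma gamma_half_le_of_one_le {b : ℝ} (hb : 1 ≤ b) : (1:ℝ)/2 ≤ Real.Gamma b := by
  rcases le_or_gt 2 b with h | h
  · linarith [gamma_one_le_of_two_le h]
  · have hb0 : b ≠ 0 := by linarith
    have h1 : 1 ≤ Real.Gamma (b + 1) := gamma_one_le_of_two_le (by linarith)
    rw [Real.Gamma_add_one hb0] at h1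
    nlinarith [Real.Gamma_pos_of_pos (show (0:ℝ) < b by linarith)]

/-- Monotonicity up to a factor 2 : for `1 ≤ a ≤ b`, `Γ a ≤ 2 Γ b`. -/
lemma gamma_le_two_mul_gamma {a b : ℝ} (h1 : 1 ≤ a) (hab : a ≤ b) :
    Real.Gamma a ≤ 2 * Real.Gamma b := by
  rcases le_or_gt a 2 with h | h
  · have h2 := gamma_half_le_of_one_le (le_trans h1 hab)
    have h3 := gamma_le_one_of_mem h1 h
    linarith
  · have hmono : Real.Gamma a ≤ Real.Gamma b := by
      rcases eq_or_lt_of_le hab with rfl | hlt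
      · exact le_rfl
      · exact (Real.Gamma_strictMonoOn_Ici (mem_Ici.mpr h.le) (mem_Ici.mpr (by linarith)) hlt).le
    have := Real.Gamma_pos_of_pos (show (0:ℝ) < b by linarith)
    linarith

set_option maxHeartbeats 1000000 in
/-- Summability of the one-dimensional Mittag-Leffler-type series. -/
lemma summable_pow_div_gamma (y κ : ℝ) (hy : 0 ≤ y) (hκ : 0 < κ) :
    Summable fun n : ℕ => y ^ n / Real.Gamma (1 + κ * n) := by
  set N : ℕ := ⌈κ⁻¹⌉₊ with hN
  have hN1 : 1 ≤ N := Nat.one_le_ceil_iff.mpr (by positivity)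
  have hNpos : (0:ℝ) < N := by exact_mod_cast hN1
  haveI : NeZero N := ⟨by omega⟩
  set z : ℝ := max y 1 with hz
  have hz1 : (1:ℝ) ≤ z := le_max_right _ _
  have hyz : y ≤ z := le_max_left _ _
  -- the majorant
  set g : ℕ → ℝ := fun q => (2 * z ^ N) * ((z ^ N) ^ q / (Nat.factorial q : ℝ)) with hg
  have hg0 : ∀ q, 0 ≤ g q := by
    intro q
    have h : (0:ℝ) < (Nat.factorial q : ℝ) := by exact_mod_cast Nat.factorial_pos q
    have hz0 : (0:ℝ) ≤ z := by linarith
    simp only [hg]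
    positivity
  have hgsum : Summable g := (Real.summable_pow_div_factorial (z ^ N)).mul_left _
  -- `fun n => g (n / N)` is summable
  have hsum2 : Summable fun n : ℕ => g (n / N) := by
    rw [← Equiv.summable_iff (Nat.divModEquiv N).symm]
    have hcomp : ∀ p : ℕ × Fin N,
        ((fun n : ℕ => g (n / N)) ∘ (Nat.divModEquiv N).symm) p = g p.1 := by
      rintro ⟨q, r⟩
      simp only [Function.comp_apply, Nat.divModEquiv_symm_apply]
      congr 1
      rw [mul_comm, Nat.mul_add_div (by omega), Nat.div_eq_of_lt r.isLt, Nat.add_zero]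
    rw [funext hcomp]
    have : Summable fun p : ℕ × Fin N => g p.1 * (fun _ : Fin N => (1:ℝ)) p.2 := by
      exact hgsum.mul_of_nonneg Summable.of_finite hg0 (fun _ => zero_le_one)
    simpa using this
  -- comparison
  refine Summable.of_nonneg_of_le (fun n => ?_) (fun n => ?_) hsum2
  · have h1 : (0:ℝ) < Real.Gamma (1 + κ * n) := Real.Gamma_pos_of_pos (by positivity)
    positivity
  · set q : ℕ := n / N with hq
    have hqn : (q:ℝ) ≤ κ * n := by
      have h1 : (q : ℝ) * N ≤ (n : ℝ) := by exact_mod_cast Nat.div_mul_le_self n N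
      have h2 : κ⁻¹ ≤ (N:ℝ) := Nat.le_ceil _
      have h3 : (q:ℝ) ≤ (n:ℝ) / N := by
        rw [le_div_iff₀ hNpos]; exact h1
      have h4 : (n:ℝ) / N ≤ κ * n := by
        rw [div_le_iff₀ hNpos]
        calc (n:ℝ) = κ * n * κ⁻¹ := by field_simp
          _ ≤ κ * n * N := by
            apply mul_le_mul_of_nonneg_left h2 (by positivity)
      linarith
    have hΓ : Real.Gamma (1 + (q:ℝ)) ≤ 2 * Real.Gamma (1 + κ * n) :=
      gamma_le_two_mul_gamma (by simp) (by linarith)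
    have hΓq : Real.Gamma (1 + (q:ℝ)) = (Nat.factorial q : ℝ) := by
      rw [add_comm]
      exact_mod_cast Real.Gamma_nat_eq_factorial q
    have hfac : (0:ℝ) < (Nat.factorial q : ℝ) := by exact_mod_cast Nat.factorial_pos q
    have hΓpos : (0:ℝ) < Real.Gamma (1 + κ * n) := Real.Gamma_pos_of_pos (by positivity)
    have hyn : y ^ n ≤ (z ^ N) ^ (q + 1) := by
      calc y ^ n ≤ z ^ n := pow_le_pow_left₀ hy hyz n
        _ ≤ z ^ (N * (q + 1)) := by
            apply pow_le_pow_right₀ hz1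
            have h5 := Nat.div_add_mod n N
            have h6 := Nat.mod_lt n (show 0 < N by omega)
            simp only [hq, Nat.mul_add, Nat.mul_one]
            omega
        _ = (z ^ N) ^ (q + 1) := by rw [← pow_mul]
    calc y ^ n / Real.Gamma (1 + κ * n)
        ≤ (z ^ N) ^ (q + 1) / ((Nat.factorial q : ℝ) / 2) := by
          apply div_le_div₀ (by positivity) hyn (by positivity)
          rw [div_le_iff₀ (by norm_num : (0:ℝ) < 2), ← hΓq] at *
          linarith [hΓ]
      _ = g q := by
          simp only [hg, pow_succ]
          field_simp

/-- Convergence of the normalization series of the `(γ₁₂, γ₃)`-deformed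
vector coherent states. -/
theorem norm_series_summable_gamma12_gamma3 (x y κ₁₂ κ₃₁ κ₃₂ : ℝ)
    (hx : 0 ≤ x) (hy : 0 ≤ y)
    (h12 : 0 ≤ κ₁₂) (h31 : 0 ≤ κ₃₁) (h32 : 0 < κ₃₂) (m : ℕ) :
    Summable fun p : ℕ × ℕ =>
      x ^ p.1 * y ^ p.2 /
        (Real.Gamma (1 + κ₁₂ * p.2 + p.1) *
          Real.Gamma (1 + κ₃₁ * p.1 + κ₃₂ * p.2 + m)) := by
  have hA : Summable fun n : ℕ => 2 * (x ^ n / Real.Gamma (1 + n)) := by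
    have h : ∀ n : ℕ, Real.Gamma (1 + (n:ℝ)) = (Nat.factorial n : ℝ) := by
      intro n; rw [add_comm]; exact_mod_cast Real.Gamma_nat_eq_factorial n
    simpa [h] using (Real.summable_pow_div_factorial x).mul_left 2
  have hB : Summable fun n : ℕ => 2 * (y ^ n / Real.Gamma (1 + κ₃₂ * n)) :=
    (summable_pow_div_gamma y κ₃₂ hy h32).mul_left 2
  have hA0 : ∀ n : ℕ, 0 ≤ 2 * (x ^ n / Real.Gamma (1 + n)) := by
    intro n
    have := Real.Gamma_pos_of_pos (show (0:ℝ) < 1 + n by positivity)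
    positivity
  have hB0 : ∀ n : ℕ, 0 ≤ 2 * (y ^ n / Real.Gamma (1 + κ₃₂ * n)) := by
    intro n
    have := Real.Gamma_pos_of_pos (show (0:ℝ) < 1 + κ₃₂ * n by positivity)
    positivity
  have hAB := hA.mul_of_nonneg hB hA0 hB0
  refine Summable.of_nonneg_of_le (fun p => ?_) (fun p => ?_) hAB
  · have h1 := Real.Gamma_pos_of_pos (show (0:ℝ) < 1 + κ₁₂ * p.2 + p.1 by positivity)
    have h2 := Real.Gamma_pos_of_pos
      (show (0:ℝ) < 1 + κ₃₁ * p.1 + κ₃₂ * p.2 + m by positivity)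
    positivity
  · obtain ⟨n₁, n₂⟩ := p
    simp only
    have hΓa := Real.Gamma_pos_of_pos (show (0:ℝ) < 1 + n₁ by positivity)
    have hΓb := Real.Gamma_pos_of_pos (show (0:ℝ) < 1 + κ₃₂ * n₂ by positivity)
    have hΓ1 := Real.Gamma_pos_of_pos (show (0:ℝ) < 1 + κ₁₂ * n₂ + n₁ by positivity)
    have hΓ2 := Real.Gamma_pos_of_pos
      (show (0:ℝ) < 1 + κ₃₁ * n₁ + κ₃₂ * n₂ + m by positivity)
    have h1 : Real.Gamma (1 + (n₁:ℝ)) ≤ 2 * Real.Gamma (1 + κ₁₂ * n₂ + n₁) :=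
      gamma_le_two_mul_gamma (by linarith [Nat.cast_nonneg (α := ℝ) n₁])
        (by nlinarith [Nat.cast_nonneg (α := ℝ) n₂])
    have h2 : Real.Gamma (1 + κ₃₂ * n₂) ≤
        2 * Real.Gamma (1 + κ₃₁ * n₁ + κ₃₂ * n₂ + m) :=
      gamma_le_two_mul_gamma (by nlinarith [Nat.cast_nonneg (α := ℝ) n₂, h32.le])
        (by nlinarith [Nat.cast_nonneg (α := ℝ) n₁, Nat.cast_nonneg (α := ℝ) m])
    have hle : (Real.Gamma (1 + (n₁:ℝ)) / 2) * (Real.Gamma (1 + κ₃₂ * n₂) / 2) ≤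
        Real.Gamma (1 + κ₁₂ * n₂ + n₁) * Real.Gamma (1 + κ₃₁ * n₁ + κ₃₂ * n₂ + m) :=
      mul_le_mul (by linarith) (by linarith) (by positivity) (by positivity)
    calc x ^ n₁ * y ^ n₂ /
          (Real.Gamma (1 + κ₁₂ * n₂ + n₁) * Real.Gamma (1 + κ₃₁ * n₁ + κ₃₂ * n₂ + m))
        ≤ x ^ n₁ * y ^ n₂ /
          ((Real.Gamma (1 + (n₁:ℝ)) / 2) * (Real.Gamma (1 + κ₃₂ * n₂) / 2)) := by
          gcongr
      _ = 2 * (x ^ n₁ / Real.Gamma (1 + (n₁:ℝ))) *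
            (2 * (y ^ n₂ / Real.Gamma (1 + κ₃₂ * n₂))) := by
          field_simp
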